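/- Upper bound on the size of a D-cover: Let 𝒳, 𝒲 be finite alphabets, d_L : 𝒳×𝒲 → [0,∞) a distortion measure, Dc ≥ 0, n ≥ 1, Q ∈ 𝒫_n(𝒳), and C ⊆ 𝒲^n. Then |𝔇(C,Q,Dc)| ≤ |C| · (n+1)^{|𝒳||𝒲|} · 2^{n h*}, where h* = sup{ H_Q(X|W) : Q_{XW} a joint distribution on 𝒳×𝒲 with 𝒳-marginal Q and E_{Q_{XW}}[d_L(X,W)] ≤ Dc } (with h* = 0, and 𝔇(C,Q,Dc) empty, if no such joint distribution exists). -/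
import Mathlib


open scoped BigOperators

noncomputable section

/-- Average per-letter distortion between sequences. -/
def seqDist {A B : Type*} (d : A → B → ℝ) {n : ℕ} (x : Fin n → A) (z : Fin n → B) : ℝ :=
  (n : ℝ)⁻¹ * ∑ i, d (x i) (z i)

/-- Empirical distribution (type) of a sequence. -/
def empDist {A : Type*} [Fintype A] [DecidableEq A] {n : ℕ} (x : Fin n → A) : A → ℝ :=
  fun a => ((Finset.univ.filter fun i => x i = a).card : ℝ) / n

/-- Type class of `Q` among length-`n` sequences. -/
def typeClass (A : Type*) [Fintype A] [DecidableEq A] (n : ℕ) (Q : A → ℝ) :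
    Set (Fin n → A) := {x | empDist x = Q}

/-- The D-cover of a set of reproductions `C`. -/
def Dcover {A W : Type*} [Fintype A] [DecidableEq A] (dL : A → W → ℝ) {n : ℕ}
    (C : Set (Fin n → W)) (Q : A → ℝ) (Dc : ℝ) : Set (Fin n → A) :=
  {x | x ∈ typeClass A n Q ∧ ∃ w ∈ C, seqDist dL x w ≤ Dc}

/-- `p` is a probability distribution on a finite alphabet. -/
def IsDist {A : Type*} [Fintype A] (p : A → ℝ) : Prop :=
  (∀ a, 0 ≤ p a) ∧ ∑ a, p a = 1

/-- Conditional entropy `H(X|W)` (base 2) of a joint distribution on `A × W`. -/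
def condEnt {A W : Type*} [Fintype A] [Fintype W] (q : A × W → ℝ) : ℝ :=
  -∑ p : A × W, q p * Real.logb 2 (q p / (∑ a, q (a, p.2)))

/-- The feasible set of joint distributions with `𝒳`-marginal `Q` and expected legitimate
distortion at most `Dc`. -/
def feasibleL {A W : Type*} [Fintype A] [Fintype W] (dL : A → W → ℝ) (Q : A → ℝ)
    (Dc : ℝ) : Set (A × W → ℝ) :=
  {q | IsDist q ∧ (∀ a, ∑ w, q (a, w) = Q a) ∧ (∑ p : A × W, q p * dL p.1 p.2) ≤ Dc}

namespace DcoverAux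

variable {𝓧 𝓦 : Type*} [Fintype 𝓧] [DecidableEq 𝓧] [Fintype 𝓦] [DecidableEq 𝓦] {n : ℕ}

/-- Joint count of letter pairs of a pair of sequences. -/
def cnt (x : Fin n → 𝓧) (w : Fin n → 𝓦) (p : 𝓧 × 𝓦) : ℕ :=
  (Finset.univ.filter fun i => (x i, w i) = p).card

lemma cnt_le (x : Fin n → 𝓧) (w : Fin n → 𝓦) (p : 𝓧 × 𝓦) : cnt x w p ≤ n :=
  le_trans (Finset.card_filter_le _ _) (by simp)

lemma sum_cnt_mul (x : Fin n → 𝓧) (w : Fin n → 𝓦) (f : 𝓧 × 𝓦 → ℝ) :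
    ∑ p, (cnt x w p : ℝ) * f p = ∑ i, f (x i, w i) := by
  rw [← Finset.sum_fiberwise' Finset.univ (fun i => (x i, w i)) f]
  refine Finset.sum_congr rfl fun p _ => ?_
  rw [Finset.sum_const, cnt, nsmul_eq_mul]

lemma prod_cnt (x : Fin n → 𝓧) (w : Fin n → 𝓦) (f : 𝓧 × 𝓦 → ℝ) :
    ∏ p, f p ^ (cnt x w p) = ∏ i, f (x i, w i) := by
  rw [← Finset.prod_fiberwise' Finset.univ (fun i => (x i, w i)) f]
  refine Finset.prod_congr rfl fun p _ => ?_
  rw [Finset.prod_const, cnt]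

/-- Size of a conditional type class is at most `2 ^ (n H(X|W))`. -/
lemma count_bound (hn : 1 ≤ n) (w : Fin n → 𝓦) (N : 𝓧 × 𝓦 → ℕ) :
    ((Finset.univ.filter fun x : Fin n → 𝓧 => cnt x w = N).card : ℝ)
      ≤ (2 : ℝ) ^ ((n : ℝ) * condEnt (fun p => (N p : ℝ) / n)) := by
  set S := Finset.univ.filter fun x : Fin n → 𝓧 => cnt x w = N with hSdef
  rcases S.eq_empty_or_nonempty with hS | ⟨x0, hx0⟩
  · simp only [hS, Finset.card_empty, Nat.cast_zero]
    positivity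
  have hx0' : cnt x0 w = N := (Finset.mem_filter.mp hx0).2
  have hn0 : (0:ℝ) < n := by exact_mod_cast hn
  set Den : 𝓦 → ℝ := fun b => ∑ a, (N (a, b) : ℝ) with hDen
  have hDen0 : ∀ b, 0 ≤ Den b := fun b => Finset.sum_nonneg fun _ _ => by positivity
  have hNleDen : ∀ p : 𝓧 × 𝓦, (N p : ℝ) ≤ Den p.2 := by
    intro p
    exact Finset.single_le_sum (f := fun a => (N (a, p.2) : ℝ))
      (fun _ _ => by positivity) (Finset.mem_univ p.1)
  set V : 𝓧 × 𝓦 → ℝ := fun p => (N p : ℝ) / Den p.2 with hV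
  have hV0 : ∀ p, 0 ≤ V p := fun p => div_nonneg (by positivity) (hDen0 _)
  have hVpos : ∀ p, 0 < N p → 0 < V p := by
    intro p hp
    have h1 : (1:ℝ) ≤ (N p : ℝ) := by exact_mod_cast hp
    exact div_pos (by linarith) (lt_of_lt_of_le (by linarith) (hNleDen p))
  have hDenw : ∀ i, 0 < Den (w i) := by
    intro i
    have : 0 < cnt x0 w (x0 i, w i) := by
      rw [cnt]
      exact Finset.card_pos.mpr ⟨i, Finset.mem_filter.mpr ⟨Finset.mem_univ i, rfl⟩⟩
    rw [hx0'] at this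
    exact lt_of_lt_of_le (by exact_mod_cast this) (hNleDen (x0 i, w i))
  have hsum1 : ∑ x : Fin n → 𝓧, ∏ i, V (x i, w i) = 1 := by
    rw [← Fintype.prod_sum (f := fun i a => V (a, w i))]
    rw [Finset.prod_eq_one]
    intro i _
    have : ∑ a, V (a, w i) = Den (w i) / Den (w i) := by
      rw [Finset.sum_div]
    rw [this, div_self (hDenw i).ne']
  set c : ℝ := ∏ p, V p ^ N p with hc
  have hmem : ∀ x ∈ S, ∏ i, V (x i, w i) = c := by
    intro x hx
    have hx' : cnt x w = N := (Finset.mem_filter.mp hx).2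
    rw [← prod_cnt x w V, hx']
  have hcpos : 0 < c := by
    refine Finset.prod_pos fun p _ => ?_
    rcases Nat.eq_zero_or_pos (N p) with h | h
    · rw [h, pow_zero]; exact one_pos
    · exact pow_pos (hVpos p h) _
  have hcard : (S.card : ℝ) * c ≤ 1 := by
    have hsle : ∑ x ∈ S, ∏ i, V (x i, w i) ≤ ∑ x : Fin n → 𝓧, ∏ i, V (x i, w i) :=
      Finset.sum_le_sum_of_subset_of_nonneg (Finset.subset_univ S)
        (fun x _ _ => Finset.prod_nonneg fun i _ => hV0 _)
    rw [hsum1] at hsle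
    calc (S.card : ℝ) * c = ∑ x ∈ S, ∏ i, V (x i, w i) := by
          rw [Finset.sum_congr rfl hmem, Finset.sum_const, nsmul_eq_mul]
      _ ≤ 1 := hsle
  have hexp : (2 : ℝ) ^ ((n : ℝ) * condEnt (fun p => (N p : ℝ) / n)) = c⁻¹ := by
    have hratio : ∀ p : 𝓧 × 𝓦,
        ((N p : ℝ) / n) / (∑ a, ((N (a, p.2) : ℝ) / n)) = V p := by
      intro p
      rw [← Finset.sum_div, div_div_div_comm, div_self hn0.ne', div_one]
    have hce : (n : ℝ) * condEnt (fun p => (N p : ℝ) / n)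
        = ∑ p : 𝓧 × 𝓦, -((N p : ℝ) * Real.logb 2 (V p)) := by
      rw [condEnt, mul_neg, Finset.mul_sum, Finset.sum_neg_distrib, neg_inj]
      refine Finset.sum_congr rfl fun p _ => ?_
      rw [hratio p]
      field_simp
    rw [hce, Real.rpow_sum_of_pos (by norm_num), ← Finset.prod_inv_distrib]
    refine Finset.prod_congr rfl fun p _ => ?_
    rcases Nat.eq_zero_or_pos (N p) with h | h
    · rw [h]; simp
    · rw [mul_comm, Real.rpow_neg (by norm_num), Real.rpow_mul (by norm_num),
        Real.rpow_logb (by norm_num) (by norm_num) (hVpos p h), Real.rpow_natCast]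
  rw [hexp, inv_eq_one_div, le_div_iff₀ hcpos]
  exact hcard

lemma cnt_marg (x : Fin n → 𝓧) (w : Fin n → 𝓦) (a : 𝓧) :
    ∑ b, cnt x w (a, b) = (Finset.univ.filter fun i => x i = a).card := by
  rw [Finset.card_eq_sum_card_fiberwise (f := fun i => w i) (t := Finset.univ)
    (fun i _ => Finset.mem_univ _)]
  refine (Finset.sum_congr rfl fun b _ => ?_).symm
  rw [cnt, Finset.filter_filter]
  congr 1
  ext i
  simp [Prod.ext_iff, and_comm]

lemma feasible_of_mem {dL : 𝓧 → 𝓦 → ℝ} {Q : 𝓧 → ℝ} {Dc : ℝ} (hn : 1 ≤ n)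
    {x : Fin n → 𝓧} {w : Fin n → 𝓦} (hx : empDist x = Q) (hd : seqDist dL x w ≤ Dc) :
    (fun p => (cnt x w p : ℝ) / n) ∈ feasibleL dL Q Dc := by
  have hn0 : (0:ℝ) < n := by exact_mod_cast hn
  refine ⟨⟨fun p => by positivity, ?_⟩, ?_, ?_⟩
  · rw [← Finset.sum_div]
    have h1 : ∑ p, (cnt x w p : ℝ) = n := by
      simpa using sum_cnt_mul x w (fun _ => 1)
    rw [h1, div_self hn0.ne']
  · intro a
    rw [← Finset.sum_div, ← hx]
    have := cnt_marg x w a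
    unfold empDist
    congr 1
    exact_mod_cast this
  · have h2 := sum_cnt_mul x w (fun p => dL p.1 p.2)
    have h3 : ∑ p : 𝓧 × 𝓦, ((cnt x w p : ℝ) / n) * dL p.1 p.2
        = (n:ℝ)⁻¹ * ∑ p : 𝓧 × 𝓦, (cnt x w p : ℝ) * dL p.1 p.2 := by
      rw [Finset.mul_sum]
      exact Finset.sum_congr rfl fun p _ => by ring
    rw [h3, h2]
    exact hd

lemma entropy_term_le {t s : ℝ} (ht : 0 ≤ t) (hts : t ≤ s) :
    -(t * Real.logb 2 (t / s)) ≤ 2 * s := by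
  rcases eq_or_lt_of_le ht with h | h
  · rw [← h]
    simp
    linarith
  · have hs : 0 < s := lt_of_lt_of_le h hts
    have hst : 0 < s / t := div_pos hs h
    have hlog : Real.log (s / t) ≤ s / t - 1 := Real.log_le_sub_one_of_pos hst
    have h2 : (0:ℝ) < Real.log 2 := Real.log_pos (by norm_num)
    have h2' : (1:ℝ)/2 ≤ Real.log 2 := by
      have := Real.log_two_gt_d9; linarith
    have hneg : Real.log (s/t) = - Real.log (t/s) := by
      rw [← Real.log_inv, inv_div]
    have key : -(t * Real.logb 2 (t/s)) = t * Real.log (s/t) / Real.log 2 := by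
      rw [hneg, Real.logb]
      ring
    have hid : t * (s/t) = s := by field_simp
    have h3 : t * Real.log (s/t) ≤ s := by
      nlinarith [mul_le_mul_of_nonneg_left hlog (le_of_lt h)]
    rw [key]
    have h4 : t * Real.log (s/t) / Real.log 2 ≤ s / Real.log 2 := by gcongr
    have h5 : s / Real.log 2 ≤ 2 * s := by
      rw [div_le_iff₀ h2]; nlinarith
    linarith

lemma condEnt_le {A W : Type*} [Fintype A] [Fintype W] {q : A × W → ℝ}
    (h0 : ∀ p, 0 ≤ q p) (h1 : ∑ p, q p = 1) :
    condEnt q ≤ 2 * Fintype.card A := by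
  have hterm : ∀ p : A × W, -(q p * Real.logb 2 (q p / ∑ a, q (a, p.2)))
      ≤ 2 * ∑ a, q (a, p.2) := fun p =>
    entropy_term_le (h0 p)
      (Finset.single_le_sum (f := fun a => q (a, p.2)) (fun a _ => h0 _) (Finset.mem_univ p.1))
  have hs : ∑ b, ∑ a, q (a, b) = 1 := by
    rw [← Fintype.sum_prod_type_right]; exact h1
  calc condEnt q = ∑ p : A × W, -(q p * Real.logb 2 (q p / ∑ a, q (a, p.2))) := by
        rw [condEnt, Finset.sum_neg_distrib]
    _ ≤ ∑ p : A × W, 2 * ∑ a, q (a, p.2) := Finset.sum_le_sum fun p _ => hterm p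
    _ = 2 * Fintype.card A := by
        rw [Fintype.sum_prod_type]
        simp only [← Finset.mul_sum, hs, Finset.sum_const, Finset.card_univ, nsmul_eq_mul]
        ring

end DcoverAux

/-- **Upper bound on the size of a D-cover.**
`|𝔇(C,Q,Dc)| ≤ |C| · (n+1)^{|𝒳||𝒲|} · 2^{n·h*}` where `h*` is the supremum of `H_Q(X|W)`
over joint distributions with `𝒳`-marginal `Q` and `E[d_L] ≤ Dc` (with `h* = 0`, and the
D-cover empty, when no such joint distribution exists). -/
theorem dcover_size_bound
    {𝓧 𝓦 : Type*} [Fintype 𝓧] [DecidableEq 𝓧] [Fintype 𝓦]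
    (dL : 𝓧 → 𝓦 → ℝ) (Dc : ℝ) (hDc : 0 ≤ Dc) {n : ℕ} (hn : 1 ≤ n)
    (Q : 𝓧 → ℝ) (hQ : ∃ x : Fin n → 𝓧, empDist x = Q) (C : Set (Fin n → 𝓦)) :
    ((Dcover dL C Q Dc).ncard : ℝ)
        ≤ (C.ncard : ℝ) * ((n : ℝ) + 1) ^ (Fintype.card 𝓧 * Fintype.card 𝓦)
            * (2 : ℝ) ^ ((n : ℝ) * sSup {h : ℝ | ∃ q ∈ feasibleL dL Q Dc, h = condEnt q}) ∧
      (feasibleL dL Q Dc = ∅ → Dcover dL C Q Dc = ∅) := by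
  classical
  open DcoverAux in
  have hn0 : (0:ℝ) < n := by exact_mod_cast hn
  have hbdd : BddAbove {h : ℝ | ∃ q ∈ feasibleL dL Q Dc, h = condEnt q} := by
    refine ⟨2 * Fintype.card 𝓧, ?_⟩
    rintro h ⟨q, hq, rfl⟩
    exact condEnt_le hq.1.1 hq.1.2
  set hstar := sSup {h : ℝ | ∃ q ∈ feasibleL dL Q Dc, h = condEnt q} with hhstar
  have hconj2 : feasibleL dL Q Dc = ∅ → Dcover dL C Q Dc = ∅ := by
    intro hfe
    rw [Set.eq_empty_iff_forall_notMem]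
    rintro x ⟨hx, w, hwC, hd⟩
    have hmem := feasible_of_mem (dL := dL) hn hx hd
    rw [hfe] at hmem
    exact hmem
  refine ⟨?_, hconj2⟩
  rcases (Dcover dL C Q Dc).eq_empty_or_nonempty with hD | ⟨x0, hx0⟩
  · rw [hD]
    simp only [Set.ncard_empty, Nat.cast_zero]
    positivity
  obtain ⟨hx0t, w0, hw0C, hd0⟩ := hx0
  have : Nonempty (Fin n → 𝓦) := ⟨w0⟩
  -- choose a witness for each element of the D-cover
  have hwit : ∀ x ∈ Dcover dL C Q Dc, ∃ w, w ∈ C ∧ seqDist dL x w ≤ Dc := by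
    rintro x ⟨_, w, h1, h2⟩; exact ⟨w, h1, h2⟩
  choose! wit hwitspec using hwit
  -- the classification map
  set φ : (Fin n → 𝓧) → (Fin n → 𝓦) × (𝓧 × 𝓦 → Fin (n+1)) :=
    fun x => (wit x, fun p => ⟨cnt x (wit x) p, Nat.lt_succ_of_le (cnt_le x (wit x) p)⟩)
    with hφ
  have hDfin : (Dcover dL C Q Dc).Finite := Set.toFinite _
  have hCfin : C.Finite := Set.toFinite _
  set D := hDfin.toFinset with hDdef
  set Cf := hCfin.toFinset with hCfdef
  rw [Set.ncard_eq_toFinset_card _ hDfin, Set.ncard_eq_toFinset_card _ hCfin]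
  have hfiber : ∀ y ∈ D.image φ,
      ((D.filter fun x => φ x = y).card : ℝ) ≤ (2:ℝ) ^ ((n:ℝ) * hstar) := by
    intro y hy
    obtain ⟨x1, hx1D, rfl⟩ := Finset.mem_image.mp hy
    have hx1mem : x1 ∈ Dcover dL C Q Dc := hDfin.mem_toFinset.mp hx1D
    set w : Fin n → 𝓦 := wit x1 with hw
    set N : 𝓧 × 𝓦 → ℕ := cnt x1 w with hN
    have hsub : (D.filter fun x => φ x = φ x1) ⊆
        Finset.univ.filter fun x => cnt x w = N := by
      intro x hx
      obtain ⟨hxD, hφx⟩ := Finset.mem_filter.mp hx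
      refine Finset.mem_filter.mpr ⟨Finset.mem_univ _, ?_⟩
      have h1 : wit x = wit x1 := congrArg Prod.fst hφx
      funext p
      have h2 : (φ x).2 p = (φ x1).2 p := by rw [hφx]
      have h3 : cnt x (wit x) p = cnt x1 (wit x1) p := congrArg Fin.val h2
      exact (congrArg (fun v => cnt x v p) h1.symm).trans h3
    have hle1 : ((D.filter fun x => φ x = φ x1).card : ℝ)
        ≤ ((Finset.univ.filter fun x : Fin n → 𝓧 => cnt x w = N).card : ℝ) := by
      exact_mod_cast Finset.card_le_card hsub
    have hle2 := count_bound (𝓧 := 𝓧) hn w N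
    have hq : (fun p => (N p : ℝ)/n) ∈ feasibleL dL Q Dc := by
      have hspec := hwitspec x1 hx1mem
      exact feasible_of_mem hn hx1mem.1 hspec.2
    have hH : condEnt (fun p => (N p:ℝ)/n) ≤ hstar :=
      le_csSup hbdd ⟨_, hq, rfl⟩
    have hle3 : (2:ℝ) ^ ((n:ℝ) * condEnt (fun p => (N p:ℝ)/n)) ≤ (2:ℝ)^((n:ℝ)*hstar) :=
      Real.rpow_le_rpow_of_exponent_le one_le_two
        (mul_le_mul_of_nonneg_left hH hn0.le)
    linarith
  have himg : ((D.image φ).card : ℝ)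
      ≤ (Cf.card : ℝ) * ((n:ℝ)+1) ^ (Fintype.card 𝓧 * Fintype.card 𝓦) := by
    have hsub : D.image φ ⊆ Cf ×ˢ (Finset.univ : Finset (𝓧 × 𝓦 → Fin (n+1))) := by
      intro y hy
      obtain ⟨x, hxD, rfl⟩ := Finset.mem_image.mp hy
      refine Finset.mem_product.mpr ⟨?_, Finset.mem_univ _⟩
      exact hCfin.mem_toFinset.mpr (hwitspec x (hDfin.mem_toFinset.mp hxD)).1
    have hcc := Finset.card_le_card hsub
    rw [Finset.card_product, Finset.card_univ] at hcc
    have hcard : Fintype.card (𝓧 × 𝓦 → Fin (n+1))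
        = (n+1) ^ (Fintype.card 𝓧 * Fintype.card 𝓦) := by
      rw [Fintype.card_fun, Fintype.card_prod, Fintype.card_fin]
    rw [hcard] at hcc
    calc ((D.image φ).card : ℝ)
        ≤ ((Cf.card * (n+1) ^ (Fintype.card 𝓧 * Fintype.card 𝓦) : ℕ) : ℝ) := by
          exact_mod_cast hcc
      _ = (Cf.card : ℝ) * ((n:ℝ)+1) ^ (Fintype.card 𝓧 * Fintype.card 𝓦) := by
          push_cast; ring
  calc ((D.card : ℕ) : ℝ)
      = ∑ y ∈ D.image φ, ((D.filter fun x => φ x = y).card : ℝ) := by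
        rw [Finset.card_eq_sum_card_image φ D]
        push_cast
        rfl
    _ ≤ ∑ _y ∈ D.image φ, (2:ℝ)^((n:ℝ)*hstar) := Finset.sum_le_sum hfiber
    _ = ((D.image φ).card : ℝ) * (2:ℝ)^((n:ℝ)*hstar) := by
        rw [Finset.sum_const, nsmul_eq_mul]
    _ ≤ (Cf.card : ℝ) * ((n:ℝ)+1) ^ (Fintype.card 𝓧 * Fintype.card 𝓦)
          * (2:ℝ)^((n:ℝ)*hstar) :=
        mul_le_mul_of_nonneg_right himg (Real.rpow_nonneg (by norm_num) _)


end
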